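/- Let c > 0, ε ∈ (0,c), and let (u_n) ⊂ L²(ℝ²) with ‖u_n‖_{L²}² = c for all n. Suppose that for every R > 0, liminf_n sup_{x∈ℝ²} ∫_{B(x,R)} u_n² ≤ c − ε. Then limsup_n V₁(u_n) = +∞, where V₁(u) = ∬ log(1+|x−y|) u(x)² u(y)² dx dy. -/

import Mathlib

open MeasureTheory Filter ENNReal

private lemma aux_blowup
    (c d R : ℝ) (hd : 0 ≤ d) (hdc : d ≤ c) (hR : 0 < R)
    (u : EuclideanSpace ℝ (Fin 2) → ℝ)
    (hmem : MemLp u 2 volume)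
    (hnorm : ∫ x : EuclideanSpace ℝ (Fin 2), u x ^ 2 = c)
    (hball : ∀ x : EuclideanSpace ℝ (Fin 2), ∫ y in Metric.ball x R, u y ^ 2 ≤ c - d) :
    ENNReal.ofReal (Real.log (1 + R) * d * c) ≤
      ∫⁻ q : EuclideanSpace ℝ (Fin 2) × EuclideanSpace ℝ (Fin 2),
        ENNReal.ofReal (Real.log (1 + dist q.1 q.2) * (u q.1) ^ 2 * (u q.2) ^ 2) := by
  have hu2 : Integrable (fun x => u x ^ 2) volume := hmem.integrable_sq
  set g : EuclideanSpace ℝ (Fin 2) → ℝ≥0∞ := fun x => ENNReal.ofReal (u x ^ 2) with hgdef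
  have hg : AEMeasurable g volume :=
    ((hmem.aestronglyMeasurable.aemeasurable.pow_const 2)).ennreal_ofReal
  have hlogR : 0 ≤ Real.log (1 + R) :=
    Real.log_nonneg (by linarith)
  set C : ℝ≥0∞ := ENNReal.ofReal (Real.log (1 + R)) with hCdef
  have hCne : C ≠ ⊤ := ENNReal.ofReal_ne_top
  -- total mass
  have htot : ∫⁻ x, g x = ENNReal.ofReal c := by
    rw [← hnorm]
    exact (ofReal_integral_eq_lintegral_ofReal hu2
      (Filter.Eventually.of_forall fun x => sq_nonneg _)).symm
  -- mass outside balls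
  have hcompl : ∀ x : EuclideanSpace ℝ (Fin 2),
      ENNReal.ofReal d ≤ ∫⁻ y in (Metric.ball x R)ᶜ, g y := by
    intro x
    have hsplit := lintegral_add_compl (μ := volume) g (measurableSet_ball (x := x) (ε := R))
    have hb : ∫⁻ y in Metric.ball x R, g y = ENNReal.ofReal (∫ y in Metric.ball x R, u y ^ 2) :=
      (ofReal_integral_eq_lintegral_ofReal (hu2.integrableOn)
        (Filter.Eventually.of_forall fun y => sq_nonneg _)).symm
    have hble : ∫⁻ y in Metric.ball x R, g y ≤ ENNReal.ofReal (c - d) := by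
      rw [hb]; exact ENNReal.ofReal_le_ofReal (hball x)
    by_contra hlt
    push_neg at hlt
    have h1 : (∫⁻ y in Metric.ball x R, g y) + (∫⁻ y in (Metric.ball x R)ᶜ, g y)
        < ENNReal.ofReal (c - d) + ENNReal.ofReal d :=
      ENNReal.add_lt_add_of_le_of_lt (ne_top_of_le_ne_top ENNReal.ofReal_ne_top hble)
        hble hlt
    rw [hsplit, htot, ← ENNReal.ofReal_add (by linarith) hd, sub_add_cancel] at h1
    exact lt_irrefl _ h1
  -- the far-field set
  set S : Set (EuclideanSpace ℝ (Fin 2) × EuclideanSpace ℝ (Fin 2)) :=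
    {q | R ≤ dist q.1 q.2} with hSdef
  have hS : MeasurableSet S :=
    (isClosed_le continuous_const (continuous_fst.dist continuous_snd)).measurableSet
  -- pointwise lower bound
  have hpt : ∀ q : EuclideanSpace ℝ (Fin 2) × EuclideanSpace ℝ (Fin 2),
      S.indicator (fun q => C * g q.1 * g q.2) q ≤
        ENNReal.ofReal (Real.log (1 + dist q.1 q.2) * (u q.1) ^ 2 * (u q.2) ^ 2) := by
    intro q
    by_cases hq : q ∈ S
    · rw [Set.indicator_of_mem hq]
      have hdist0 : (0:ℝ) ≤ dist q.1 q.2 := dist_nonneg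
      have hlog0 : 0 ≤ Real.log (1 + dist q.1 q.2) := Real.log_nonneg (by linarith)
      rw [ENNReal.ofReal_mul (by positivity), ENNReal.ofReal_mul hlog0]
      refine mul_le_mul' (mul_le_mul' ?_ le_rfl) le_rfl
      exact ENNReal.ofReal_le_ofReal
        (Real.log_le_log (by linarith) (by have := hq; simpa [hSdef] using by linarith [Set.mem_setOf.mp hq]))
    · rw [Set.indicator_of_notMem hq]; exact zero_le
  calc ENNReal.ofReal (Real.log (1 + R) * d * c)
      = C * ENNReal.ofReal d * ENNReal.ofReal c := by
        rw [ENNReal.ofReal_mul (by positivity), ENNReal.ofReal_mul hlogR]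
    _ = C * ENNReal.ofReal d * ∫⁻ x, g x := by rw [htot]
    _ = ∫⁻ x, C * ENNReal.ofReal d * g x :=
        (lintegral_const_mul' _ _ (ENNReal.mul_ne_top hCne ENNReal.ofReal_ne_top)).symm
    _ ≤ ∫⁻ x, C * g x * ∫⁻ y in (Metric.ball x R)ᶜ, g y := by
        refine lintegral_mono fun x => ?_
        calc C * ENNReal.ofReal d * g x = C * g x * ENNReal.ofReal d := by ring
          _ ≤ C * g x * ∫⁻ y in (Metric.ball x R)ᶜ, g y :=
            mul_le_mul' le_rfl (hcompl x)
    _ = ∫⁻ x, ∫⁻ y, S.indicator (fun q => C * g q.1 * g q.2) (x, y) := by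
        refine lintegral_congr fun x => ?_
        have : ∀ y, S.indicator (fun q => C * g q.1 * g q.2) (x, y)
            = ((Metric.ball x R)ᶜ).indicator (fun y => C * g x * g y) y := by
          intro y
          have hmemiff : (x, y) ∈ S ↔ y ∈ (Metric.ball x R)ᶜ := by
            simp [hSdef, Metric.mem_ball, dist_comm, not_lt]
          by_cases hy : (x, y) ∈ S
          · rw [Set.indicator_of_mem hy, Set.indicator_of_mem (hmemiff.mp hy)]
          · rw [Set.indicator_of_notMem hy,
              Set.indicator_of_notMem (fun h => hy (hmemiff.mpr h))]
        simp_rw [this]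
        rw [lintegral_indicator Metric.isOpen_ball.measurableSet.compl,
          lintegral_const_mul' _ _ (ENNReal.mul_ne_top hCne ENNReal.ofReal_ne_top)]
    _ = ∫⁻ q : EuclideanSpace ℝ (Fin 2) × EuclideanSpace ℝ (Fin 2),
          S.indicator (fun q => C * g q.1 * g q.2) q := by
        rw [Measure.volume_eq_prod]
        refine (lintegral_prod _ ?_).symm
        exact ((aemeasurable_const.mul hg.comp_fst).mul hg.comp_snd).indicator hS
    _ ≤ _ := lintegral_mono hpt

theorem log_interaction_blowup
    (c ε : ℝ) (hc : 0 < c) (hε : ε ∈ Set.Ioo 0 c)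
    (u : ℕ → EuclideanSpace ℝ (Fin 2) → ℝ)
    (hmem : ∀ n, MemLp (u n) 2 volume)
    (hnorm : ∀ n, ∫ x : EuclideanSpace ℝ (Fin 2), (u n x) ^ 2 = c)
    (hvanish : ∀ R > (0 : ℝ),
      Filter.atTop.liminf (fun n =>
        ⨆ x : EuclideanSpace ℝ (Fin 2), ∫ y in Metric.ball x R, (u n y) ^ 2) ≤ c - ε) :
    Filter.atTop.limsup (fun n =>
      ∫⁻ q : EuclideanSpace ℝ (Fin 2) × EuclideanSpace ℝ (Fin 2),
        ENNReal.ofReal (Real.log (1 + dist q.1 q.2) * (u n q.1) ^ 2 * (u n q.2) ^ 2)) = ⊤ := by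
  obtain ⟨hε0, hεc⟩ := hε
  set F : ℕ → ℝ≥0∞ := fun n =>
    ∫⁻ q : EuclideanSpace ℝ (Fin 2) × EuclideanSpace ℝ (Fin 2),
      ENNReal.ofReal (Real.log (1 + dist q.1 q.2) * (u n q.1) ^ 2 * (u n q.2) ^ 2) with hFdef
  have key : ∀ M : ℝ, ENNReal.ofReal M ≤ Filter.atTop.limsup F := by
    intro M
    set R : ℝ := Real.exp (2 * |M| / (ε * c)) with hRdef
    have hR : 0 < R := Real.exp_pos _
    have hlogR : Real.log (1 + R) * (ε / 2) * c ≥ M := by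
      have h1 : Real.log R = 2 * |M| / (ε * c) := Real.log_exp _
      have h2 : Real.log R ≤ Real.log (1 + R) := Real.log_le_log hR (by linarith)
      have h3 : Real.log R * (ε / 2) * c = |M| := by
        rw [h1]; field_simp
      nlinarith [abs_nonneg M, le_abs_self M, mul_pos (half_pos hε0) hc,
        mul_le_mul_of_nonneg_right (mul_le_mul_of_nonneg_right h2 (le_of_lt (half_pos hε0))) hc.le]
    -- ball masses are bounded by c
    have hballc : ∀ n (x : EuclideanSpace ℝ (Fin 2)),
        ∫ y in Metric.ball x R, (u n y) ^ 2 ≤ c := by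
      intro n x
      rw [← hnorm n]
      exact setIntegral_le_integral (hmem n).integrable_sq
        (Filter.Eventually.of_forall fun y => sq_nonneg _)
    set f : ℕ → ℝ := fun n =>
      ⨆ x : EuclideanSpace ℝ (Fin 2), ∫ y in Metric.ball x R, (u n y) ^ 2 with hfdef
    have hbdd : ∀ n, BddAbove (Set.range fun x : EuclideanSpace ℝ (Fin 2) =>
        ∫ y in Metric.ball x R, (u n y) ^ 2) := by
      intro n
      exact ⟨c, by rintro _ ⟨x, rfl⟩; exact hballc n x⟩
    have hfc : ∀ n, f n ≤ c := fun n => ciSup_le fun x => hballc n x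
    have hcob : Filter.IsCoboundedUnder (· ≥ ·) Filter.atTop f :=
      Filter.isCoboundedUnder_ge_of_le Filter.atTop hfc
    have hliminf : Filter.atTop.liminf f < c - ε / 2 :=
      lt_of_le_of_lt (hvanish R hR) (by linarith)
    have hfreq : ∃ᶠ n in Filter.atTop, f n < c - ε / 2 :=
      Filter.frequently_lt_of_liminf_lt hcob hliminf
    have hfreq' : ∃ᶠ n in Filter.atTop, ENNReal.ofReal M ≤ F n := by
      refine hfreq.mono fun n hn => ?_
      have hball : ∀ x : EuclideanSpace ℝ (Fin 2),
          ∫ y in Metric.ball x R, (u n y) ^ 2 ≤ c - ε / 2 := by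
        intro x
        exact le_of_lt (lt_of_le_of_lt (le_ciSup (hbdd n) x) hn)
      calc ENNReal.ofReal M ≤ ENNReal.ofReal (Real.log (1 + R) * (ε / 2) * c) :=
            ENNReal.ofReal_le_ofReal hlogR
        _ ≤ F n := aux_blowup c (ε / 2) R (by linarith) (by linarith) hR (u n)
            (hmem n) (hnorm n) hball
    exact Filter.le_limsup_of_frequently_le hfreq'
      ⟨⊤, Filter.Eventually.of_forall fun _ => le_top⟩
  by_contra hne
  have htop : Filter.atTop.limsup F ≠ ⊤ := hne
  have h1 : ENNReal.ofReal ((Filter.atTop.limsup F).toReal + 1) ≤ Filter.atTop.limsup F :=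
    key _
  have h2 : Filter.atTop.limsup F < ENNReal.ofReal ((Filter.atTop.limsup F).toReal + 1) := by
    rw [ENNReal.lt_ofReal_iff_toReal_lt htop]
    linarith
  exact absurd (lt_of_le_of_lt h1 h2) (lt_irrefl _)
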